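/- Let (R, σ) be a difference C-algebra, q ∈ C nonzero, and on the twisted power series ring R[[X; σ]] define Θ^{(1)}(Σ_i X^i a_i) = Σ_i [i]_q X^{i−1} a_i, where [i]_q = 1 + q + ... + q^{i−1}. Then Θ^{(1)} satisfies the twisted Leibniz rule Θ^{(1)}(fg) = Σ(f)Θ^{(1)}(g) + Θ^{(1)}(f)g for all f, g ∈ R[[X; σ]], where Σ(Σ_i X^i a_i) = Σ_i X^i q^i σ(a_i). -/

import Mathlib

/-- Multiplication of twisted power series `Σᵢ Xⁱ aᵢ` over `(R, σ)`, with commutation rule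
`aX = Xσ(a)` (so `(Xⁱa)(Xʲb) = X^{i+j} σʲ(a) b`), written on coefficient sequences. -/
noncomputable def tmul {R : Type*} [Ring R] (σ : R →+* R) (f g : ℕ → R) : ℕ → R :=
  fun n => ∑ p ∈ Finset.HasAntidiagonal.antidiagonal n, (σ ^ p.2) (f p.1) * g p.2

lemma pow_apply_smul {R : Type*} [Ring R] [Algebra ℂ R] (σ : R →ₐ[ℂ] R) (p : ℕ) (c : ℂ)
    (x : R) : ((σ : R →+* R) ^ p) (c • x) = c • ((σ : R →+* R) ^ p) x := by
  induction p generalizing x with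
  | zero => simp
  | succ p ih =>
      have : ((σ : R →+* R) ^ (p + 1)) = ((σ : R →+* R) ^ p).comp (σ : R →+* R) := by
        rw [pow_succ]; rfl
      rw [this, RingHom.comp_apply]
      have hs : (σ : R →+* R) (c • x) = c • (σ : R →+* R) x := map_smul σ c x
      rw [hs, ih, RingHom.comp_apply]

/-- Let `(R, σ)` be a difference `ℂ`-algebra, `q ∈ ℂ` nonzero. On the twisted power
series ring `R[[X; σ]]`, the map `Θ⁽¹⁾(Σᵢ Xⁱ aᵢ) = Σᵢ [i]_q X^{i−1} aᵢ` (with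
`[i]_q = 1 + q + ⋯ + q^{i-1}`) satisfies the twisted Leibniz rule
`Θ⁽¹⁾(fg) = Σ(f)Θ⁽¹⁾(g) + Θ⁽¹⁾(f)g`, where `Σ(Σᵢ Xⁱ aᵢ) = Σᵢ Xⁱ qⁱ σ(aᵢ)`. -/
theorem Theta_one_twisted_Leibniz
    (R : Type*) [Ring R] [Algebra ℂ R] (σ : R →ₐ[ℂ] R) (q : ℂ) (hq : q ≠ 0)
    (Sm Th : (ℕ → R) → (ℕ → R))
    (hSm : ∀ f n, Sm f n = q ^ n • σ (f n))
    (hTh : ∀ f n, Th f n = (∑ k ∈ Finset.range (n + 1), q ^ k) • f (n + 1)) :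
    ∀ f g : ℕ → R,
      Th (tmul (σ : R →+* R) f g) =
        tmul (σ : R →+* R) (Sm f) (Th g) + tmul (σ : R →+* R) (Th f) g := by
  intro f g
  funext n
  simp only [hTh, hSm, tmul, Pi.add_apply,
    Finset.Nat.sum_antidiagonal_eq_sum_range_succ_mk]
  -- notation
  set Q : ℕ → ℂ := fun m => ∑ k ∈ Finset.range m, q ^ k with hQ
  set T : ℕ → R := fun k => ((σ : R →+* R) ^ (n + 1 - k)) (f k) * g (n + 1 - k) with hT
  -- LHS
  have hL : (Q (n + 1)) • ∑ k ∈ Finset.range (n + 1 + 1),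
      ((σ : R →+* R) ^ (n + 1 - k)) (f k) * g (n + 1 - k)
      = ∑ k ∈ Finset.range (n + 2), (Q (n + 1)) • T k := by
    rw [Finset.smul_sum]
  rw [hL]
  -- split each coefficient
  have hsplit : ∀ k ∈ Finset.range (n + 2),
      (Q (n + 1)) • T k = (Q k) • T k + (q ^ k * Q (n + 1 - k)) • T k := by
    intro k hk
    have hk' : k ≤ n + 1 := Nat.lt_succ_iff.mp (Finset.mem_range.mp hk)
    have hQsplit : Q (n + 1) = Q k + q ^ k * Q (n + 1 - k) := by
      have h : k + (n + 1 - k) = n + 1 := Nat.add_sub_cancel' hk'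
      have hadd := Finset.sum_range_add (fun i => q ^ i) k (n + 1 - k)
      rw [h] at hadd
      rw [hQ]
      simp only
      rw [hadd, Finset.mul_sum]
      congr 1
      exact Finset.sum_congr rfl fun i _ => pow_add q k i
    rw [hQsplit, add_smul]
  rw [Finset.sum_congr rfl hsplit, Finset.sum_add_distrib]
  -- first part matches the second RHS sum (shift index)
  have h1 : ∑ k ∈ Finset.range (n + 2), (Q k) • T k
      = ∑ k ∈ Finset.range (n + 1),
          ((σ : R →+* R) ^ (n - k)) ((Q (k + 1)) • f (k + 1)) * g (n - k) := by
    rw [Finset.sum_range_succ']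
    have h0 : (Q 0) • T 0 = 0 := by simp [hQ]
    rw [h0, add_zero]
    refine Finset.sum_congr rfl fun k hk => ?_
    have hk' : k ≤ n := Nat.lt_succ_iff.mp (Finset.mem_range.mp hk)
    have hsub : n + 1 - (k + 1) = n - k := by omega
    rw [hT]
    simp only [hsub]
    rw [pow_apply_smul, smul_mul_assoc]
  -- second part matches the first RHS sum
  have h2 : ∑ k ∈ Finset.range (n + 2), (q ^ k * Q (n + 1 - k)) • T k
      = ∑ k ∈ Finset.range (n + 1),
          ((σ : R →+* R) ^ (n - k)) (q ^ k • σ (f k)) * ((Q (n - k + 1)) • g (n - k + 1)) := by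
    rw [Finset.sum_range_succ]
    have hlast : (q ^ (n + 1) * Q (n + 1 - (n + 1))) • T (n + 1) = 0 := by
      simp [hQ]
    rw [hlast, add_zero]
    refine Finset.sum_congr rfl fun k hk => ?_
    have hk' : k ≤ n := Nat.lt_succ_iff.mp (Finset.mem_range.mp hk)
    have hsub : n + 1 - k = n - k + 1 := by omega
    rw [hT]
    simp only [hsub]
    have hpow : ((σ : R →+* R) ^ (n - k + 1)) (f k)
        = ((σ : R →+* R) ^ (n - k)) (σ (f k)) := by
      have : ((σ : R →+* R) ^ (n - k + 1)) = ((σ : R →+* R) ^ (n - k)).comp (σ : R →+* R) := by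
        rw [pow_succ]; rfl
      rw [this]; rfl
    rw [hpow, pow_apply_smul, mul_smul, smul_mul_assoc, mul_smul_comm]
  rw [h1, h2, add_comm]
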